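/- There exists a constant C > 0 with the following property. Let f : [1,T] → ℂ be continuously differentiable and let f₁, f₂, f₃ : [1,T] → ℂ be continuous, with f'(t) + ν γ(t) f(t) = 2π i k f₁(t) + f₂(t) + f₃(t) for all t ∈ [1,T]. Then sup_{t∈[1,T]} e^{2aν^{1/3}t}|f(t)|² + ∫₁^T e^{2aν^{1/3}t} (2π k)² γ(t)^{−1} |f(t)|² dt + ν ∫₁^T e^{2aν^{1/3}t} γ(t) |f(t)|² dt + ν^{1/3} ∫₁^T e^{2aν^{1/3}t} |f(t)|² dt ≤ C ( |f(1)|² + |k|(k²+l²)^{−1/2} ∫₁^T e^{2aν^{1/3}t} γ(t) |f₁(t)|² dt + ν^{−1/3} ∫₁^T e^{2aν^{1/3}t} |f₂(t)|² dt + ν^{−1} ∫₁^T e^{2aν^{1/3}t} γ(t)^{−1} |f₃(t)|² dt ). The constant C is independent of ν, T, a, k, l, η and of f, f₁, f₂, f₃. -/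

import Mathlib

open Set MeasureTheory intervalIntegral

lemma aux_ftc {T : ℝ} (E e : ℝ → ℝ)
    (hE : ∀ σ ∈ Icc (1:ℝ) T, HasDerivWithinAt E (e σ) (Icc (1:ℝ) T) σ)
    (he : ContinuousOn e (Icc (1:ℝ) T)) {t : ℝ} (h1t : 1 ≤ t) (htT : t ≤ T) :
    ∫ σ in (1:ℝ)..t, e σ = E t - E 1 := by
  refine integral_eq_sub_of_hasDeriv_right_of_le h1t
    (fun σ hσ => ((hE σ ⟨hσ.1, hσ.2.trans htT⟩).continuousWithinAt).mono
      (Icc_subset_Icc le_rfl htT)) (fun x hx => ?_) ?_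
  · refine (hE x ⟨hx.1.le, hx.2.le.trans htT⟩).mono_of_mem_nhdsWithin ?_
    exact Filter.mem_of_superset (Ioc_mem_nhdsGT_of_mem ⟨le_rfl, hx.2⟩)
      (fun y hy => ⟨hx.1.le.trans hy.1.le, hy.2.trans htT⟩)
  · exact (he.mono (Icc_subset_Icc le_rfl htT)).intervalIntegrable_of_Icc h1t

lemma aux_arctan {c b t₀ : ℝ} (hb : 0 < b) (hc : 0 ≤ c) (x y : ℝ) :
    (∫ σ in x..y, c / (1 + (b * (σ - t₀))^2)) ≤ c / b * Real.pi := by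
  have hd : ∀ σ : ℝ, HasDerivAt (fun τ => c / b * Real.arctan (b * (τ - t₀)))
      (c / (1 + (b * (σ - t₀))^2)) σ := by
    intro σ
    have h1 : HasDerivAt (fun τ : ℝ => b * (τ - t₀)) b σ := by
      simpa using ((hasDerivAt_id σ).sub_const t₀).const_mul b
    have h2 := (Real.hasDerivAt_arctan (b * (σ - t₀))).comp σ h1
    have h3 := h2.const_mul (c / b)
    have hb0 : b ≠ 0 := hb.ne'
    exact h3.congr_deriv (by field_simp)
  have hcont : Continuous fun σ : ℝ => c / (1 + (b * (σ - t₀))^2) := by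
    apply Continuous.div continuous_const (by continuity)
    intro σ; positivity
  rw [integral_eq_sub_of_hasDerivAt (fun σ _ => hd σ) (hcont.intervalIntegrable x y)]
  have b1 := Real.arctan_lt_pi_div_two (b * (y - t₀))
  have b2 := Real.neg_pi_div_two_lt_arctan (b * (x - t₀))
  have hcb : 0 ≤ c / b := div_nonneg hc hb.le
  nlinarith [Real.pi_pos]

lemma aux_inner_sub (z w : ℂ) (r : ℝ) :
    (inner ℝ z (w - (r:ℂ) * z) : ℝ) = (inner ℝ z w : ℝ) - r * ‖z‖^2 := by
  simp only [Complex.inner, Complex.mul_re, Complex.sq_norm,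
    Complex.normSq_apply, Complex.sub_re, Complex.sub_im, Complex.mul_im,
    Complex.ofReal_re, Complex.ofReal_im, Complex.conj_re, Complex.conj_im]
  ring

lemma aux_coeff_norm (w : ℂ) (k : ℤ) :
    ‖2 * (Real.pi:ℂ) * Complex.I * (k:ℂ) * w‖ = 2 * Real.pi * |(k:ℝ)| * ‖w‖ := by
  simp [norm_mul, abs_of_pos Real.pi_pos]

lemma aux_gronwall {T B : ℝ} (h1T : (1:ℝ) ≤ T) (E e P h : ℝ → ℝ)
    (hE : ∀ σ ∈ Icc (1:ℝ) T, HasDerivWithinAt E (e σ) (Icc (1:ℝ) T) σ)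
    (hE0 : ∀ σ ∈ Icc (1:ℝ) T, 0 ≤ E σ)
    (he : ContinuousOn e (Icc (1:ℝ) T))
    (hP : Continuous P) (hP0 : ∀ σ, 0 ≤ P σ)
    (hh : ContinuousOn h (Icc (1:ℝ) T)) (hh0 : ∀ σ ∈ Icc (1:ℝ) T, 0 ≤ h σ)
    (hineq : ∀ σ ∈ Icc (1:ℝ) T, e σ ≤ P σ * E σ + h σ)
    (hB : (∫ σ in (1:ℝ)..T, P σ) ≤ B) :
    ∀ t ∈ Icc (1:ℝ) T, E t ≤ Real.exp B * (E 1 + ∫ σ in (1:ℝ)..T, h σ) := by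
  intro t ht
  set Q : ℝ → ℝ := fun τ => ∫ σ in (1:ℝ)..τ, P σ with hQdef
  have hQd : ∀ τ, HasDerivAt Q (P τ) τ := fun τ =>
    intervalIntegral.integral_hasDerivAt_right (hP.intervalIntegrable 1 τ)
      (hP.stronglyMeasurableAtFilter volume (nhds τ)) hP.continuousAt
  have hQ0 : ∀ τ, 1 ≤ τ → 0 ≤ Q τ := fun τ hτ =>
    integral_nonneg hτ (fun σ _ => hP0 σ)
  have hQB : Q t ≤ B := by
    have hsplit : Q t + (∫ σ in t..T, P σ) = Q T :=
      integral_add_adjacent_intervals (hP.intervalIntegrable 1 t) (hP.intervalIntegrable t T)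
    have h2 : 0 ≤ ∫ σ in t..T, P σ := integral_nonneg ht.2 (fun σ _ => hP0 σ)
    have : Q T ≤ B := hB
    linarith
  have hQc : Continuous Q := by
    refine continuous_iff_continuousAt.2 fun τ => (hQd τ).continuousAt
  have hEc : ContinuousOn E (Icc (1:ℝ) T) := fun σ hσ => (hE σ hσ).continuousWithinAt
  have hV : ∀ σ ∈ Icc (1:ℝ) T, HasDerivWithinAt (fun τ => Real.exp (-Q τ) * E τ)
      (Real.exp (-Q σ) * (e σ - P σ * E σ)) (Icc (1:ℝ) T) σ := by
    intro σ hσ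
    have h1 : HasDerivAt (fun τ => Real.exp (-Q τ)) (Real.exp (-Q σ) * (-P σ)) σ := by
      simpa using ((hQd σ).neg).exp
    have h2 := h1.hasDerivWithinAt.mul (hE σ hσ)
    exact h2.congr_deriv (by ring)
  have hVc' : ContinuousOn (fun σ => Real.exp (-Q σ) * (e σ - P σ * E σ)) (Icc (1:ℝ) T) :=
    ((hQc.neg.rexp).continuousOn).mul (he.sub ((hP.continuousOn).mul hEc))
  have hftc := aux_ftc (fun τ => Real.exp (-Q τ) * E τ) _ hV hVc' ht.1 ht.2
  have hmono : (∫ σ in (1:ℝ)..t, Real.exp (-Q σ) * (e σ - P σ * E σ))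
      ≤ ∫ σ in (1:ℝ)..t, h σ := by
    refine integral_mono_on ht.1
      ((hVc'.mono (Icc_subset_Icc le_rfl ht.2)).intervalIntegrable_of_Icc ht.1)
      ((hh.mono (Icc_subset_Icc le_rfl ht.2)).intervalIntegrable_of_Icc ht.1) ?_
    intro σ hσ
    have hσT : σ ∈ Icc (1:ℝ) T := ⟨hσ.1, hσ.2.trans ht.2⟩
    have h1 : e σ - P σ * E σ ≤ h σ := by linarith [hineq σ hσT]
    have h2 : Real.exp (-Q σ) ≤ 1 := Real.exp_le_one_iff.2 (by linarith [hQ0 σ hσ.1])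
    rcases le_total (e σ - P σ * E σ) 0 with hc | hc
    · exact le_trans (mul_nonpos_of_nonneg_of_nonpos (Real.exp_pos _).le hc) (hh0 σ hσT)
    · calc Real.exp (-Q σ) * (e σ - P σ * E σ) ≤ 1 * (e σ - P σ * E σ) :=
            mul_le_mul_of_nonneg_right h2 hc
        _ ≤ h σ := by linarith
  have hmono2 : (∫ σ in (1:ℝ)..t, h σ) ≤ ∫ σ in (1:ℝ)..T, h σ := by
    have hsplit : (∫ σ in (1:ℝ)..t, h σ) + (∫ σ in t..T, h σ) = ∫ σ in (1:ℝ)..T, h σ :=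
      integral_add_adjacent_intervals
        ((hh.mono (Icc_subset_Icc le_rfl ht.2)).intervalIntegrable_of_Icc ht.1)
        ((hh.mono (Icc_subset_Icc ht.1 le_rfl)).intervalIntegrable_of_Icc ht.2)
    have h2 : 0 ≤ ∫ σ in t..T, h σ :=
      integral_nonneg ht.2 (fun σ hσ => hh0 σ ⟨ht.1.trans hσ.1, hσ.2⟩)
    linarith
  have hQ1 : Q 1 = 0 := integral_same
  have hVt : Real.exp (-Q t) * E t ≤ E 1 + ∫ σ in (1:ℝ)..T, h σ := by
    have h0 : Real.exp (-Q 1) * E 1 = E 1 := by rw [hQ1]; simp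
    beta_reduce at hftc
    linarith [hftc, hmono, hmono2]
  have hH0 : 0 ≤ ∫ σ in (1:ℝ)..T, h σ := integral_nonneg h1T hh0
  have hE10 : 0 ≤ E 1 := hE0 1 ⟨le_rfl, h1T⟩
  have key : E t ≤ Real.exp (Q t) * (E 1 + ∫ σ in (1:ℝ)..T, h σ) := by
    have h3 : Real.exp (Q t) * (Real.exp (-Q t) * E t)
        ≤ Real.exp (Q t) * (E 1 + ∫ σ in (1:ℝ)..T, h σ) :=
      mul_le_mul_of_nonneg_left hVt (Real.exp_pos _).le
    rwa [← mul_assoc, ← Real.exp_add, add_neg_cancel, Real.exp_zero, one_mul] at h3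
  refine key.trans (mul_le_mul_of_nonneg_right (Real.exp_le_exp.2 hQB) (by linarith))

set_option maxHeartbeats 2000000 in
theorem stmt9 : ∃ C : ℝ, 0 < C ∧ ∀ (ν T a : ℝ) (k l : ℤ) (η : ℝ)
    (f f₁ f₂ f₃ : ℝ → ℂ),
    0 < ν → ν < 1 → 1 < T → 0 ≤ a → a ≤ 4 → k ≠ 0 →
    ContinuousOn f₁ (Set.Icc 1 T) → ContinuousOn f₂ (Set.Icc 1 T) →
    ContinuousOn f₃ (Set.Icc 1 T) →
    ∀ γ : ℝ → ℝ,
    (∀ t, γ t = (2 * Real.pi) ^ 2 * ((k : ℝ) ^ 2 + (η - (k : ℝ) * t) ^ 2 + (l : ℝ) ^ 2)) →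
    (∀ t ∈ Set.Icc (1:ℝ) T, HasDerivWithinAt f
        (2 * (Real.pi : ℂ) * Complex.I * (k : ℂ) * f₁ t + f₂ t + f₃ t
          - (ν : ℂ) * (γ t : ℂ) * f t) (Set.Icc (1:ℝ) T) t) →
    ∀ t ∈ Set.Icc (1:ℝ) T,
      Real.exp (2 * a * ν ^ ((1:ℝ)/3) * t) * ‖f t‖ ^ 2
      + (∫ s in (1:ℝ)..T, Real.exp (2 * a * ν ^ ((1:ℝ)/3) * s)
            * (2 * Real.pi * (k : ℝ)) ^ 2 * (γ s)⁻¹ * ‖f s‖ ^ 2)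
      + ν * (∫ s in (1:ℝ)..T, Real.exp (2 * a * ν ^ ((1:ℝ)/3) * s) * γ s * ‖f s‖ ^ 2)
      + ν ^ ((1:ℝ)/3) * (∫ s in (1:ℝ)..T, Real.exp (2 * a * ν ^ ((1:ℝ)/3) * s) * ‖f s‖ ^ 2)
      ≤ C * (‖f 1‖ ^ 2
        + |(k : ℝ)| * ((k : ℝ) ^ 2 + (l : ℝ) ^ 2) ^ (-(1:ℝ)/2) *
            (∫ s in (1:ℝ)..T, Real.exp (2 * a * ν ^ ((1:ℝ)/3) * s) * γ s * ‖f₁ s‖ ^ 2)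
        + ν ^ (-(1:ℝ)/3) *
            (∫ s in (1:ℝ)..T, Real.exp (2 * a * ν ^ ((1:ℝ)/3) * s) * ‖f₂ s‖ ^ 2)
        + ν⁻¹ *
            (∫ s in (1:ℝ)..T, Real.exp (2 * a * ν ^ ((1:ℝ)/3) * s) * (γ s)⁻¹ * ‖f₃ s‖ ^ 2)) := by
  refine ⟨1000 * Real.exp 39, by positivity, ?_⟩
  intro ν T a k l η f f₁ f₂ f₃ hν hν1 hT ha0 ha4 hk hcf1 hcf2 hcf3 γ hγ hf t ht
  have h1T : (1:ℝ) ≤ T := hT.le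
  have hπ : 0 < Real.pi := Real.pi_pos
  -- basic scalars
  set u := ν ^ ((1:ℝ)/3) with hu_def
  have hu : 0 < u := Real.rpow_pos_of_pos hν _
  have hu1 : u ≤ 1 := Real.rpow_le_one hν.le hν1.le (by norm_num)
  have hu3 : u ^ 3 = ν := by
    rw [hu_def, ← Real.rpow_natCast (ν ^ ((1:ℝ)/3)) 3, ← Real.rpow_mul hν.le]
    norm_num
  set kR : ℝ := (k:ℝ) with hkR_def
  have hkR0 : kR ≠ 0 := Int.cast_ne_zero.2 hk
  have hk1 : 1 ≤ |kR| := by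
    rw [hkR_def, ← Int.cast_abs]
    exact_mod_cast Int.one_le_abs hk
  set L : ℝ := Real.sqrt (kR^2 + (l:ℝ)^2) with hL_def
  have hL2 : L^2 = kR^2 + (l:ℝ)^2 := Real.sq_sqrt (by positivity)
  have hLpos : 0 < L := Real.sqrt_pos.2 (by positivity)
  have hkL : |kR| ≤ L := by
    rw [hL_def, ← Real.sqrt_sq_eq_abs]
    exact Real.sqrt_le_sqrt (by linarith only [sq_nonneg ((l:ℝ))])
  set t₀ : ℝ := η / kR with ht₀_def
  have hshift : ∀ σ:ℝ, (η - kR*σ)^2 = kR^2 * (σ - t₀)^2 := by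
    intro σ
    rw [ht₀_def]
    field_simp
    ring
  have hγ' : ∀ σ, γ σ = 4*Real.pi^2*(L^2 + kR^2*(σ - t₀)^2) := by
    intro σ
    rw [hγ σ, hshift σ, hL2]
    ring
  have hγpos : ∀ σ, 0 < γ σ := by
    intro σ
    rw [hγ' σ]
    have h1 : 0 < L^2 := by positivity
    have h2 : 0 < L^2 + kR^2*(σ - t₀)^2 := by linarith only [h1, mul_nonneg (sq_nonneg kR) (sq_nonneg (σ - t₀))]
    have h3 : (0:ℝ) < 4*Real.pi^2 := by positivity
    exact mul_pos h3 h2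
  set c : ℝ := |kR| / L with hc_def
  have hc0 : 0 < c := div_pos (by linarith only [hk1]) hLpos
  have hc1 : c ≤ 1 := (div_le_one hLpos).2 hkL
  have hcL : c * L = |kR| := div_mul_cancel₀ _ hLpos.ne'
  set b₁ : ℝ := (2*Real.pi/3) * |kR| * u with hb₁_def
  have hb₁ : 0 < b₁ := by positivity
  -- function definitions
  set E : ℝ → ℝ := fun σ => Real.exp (2*a*u*σ) * ‖f σ‖^2 with hE_def
  set Fc : ℝ → ℂ := fun σ => 2 * (Real.pi : ℂ) * Complex.I * (k : ℂ) * f₁ σ + f₂ σ + f₃ σ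
    with hFc_def
  set fd : ℝ → ℂ := fun σ => Fc σ - (ν : ℂ) * (γ σ : ℂ) * f σ with hfd_def
  set efun : ℝ → ℝ := fun σ => 2*a*u*(Real.exp (2*a*u*σ) * ‖f σ‖^2)
    + Real.exp (2*a*u*σ) * (2 * (inner ℝ (f σ) (fd σ) : ℝ)) with hefun_def
  set Pone : ℝ → ℝ := fun σ => 18*u / (1 + (b₁*(σ - t₀))^2) with hPone_def
  set Ptwo : ℝ → ℝ := fun σ => c / (1 + (c*(σ - t₀))^2) with hPtwo_def
  set hfun : ℝ → ℝ := fun σ => c * (Real.exp (2*a*u*σ) * γ σ * ‖f₁ σ‖^2)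
    + u⁻¹ * (Real.exp (2*a*u*σ) * ‖f₂ σ‖^2)
    + 2*ν⁻¹ * (Real.exp (2*a*u*σ) * (γ σ)⁻¹ * ‖f₃ σ‖^2) with hhfun_def
  -- continuity facts
  have hγc : Continuous γ := by
    have : γ = fun σ => (2 * Real.pi) ^ 2 * (kR ^ 2 + (η - kR * σ) ^ 2 + (l:ℝ) ^ 2) :=
      funext hγ
    rw [this]; fun_prop
  have hXc : Continuous (fun σ : ℝ => Real.exp (2*a*u*σ)) := by fun_prop
  have hfc : ContinuousOn f (Icc 1 T) := fun σ hσ => (hf σ hσ).continuousWithinAt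
  have hFcc : ContinuousOn Fc (Icc 1 T) := by
    rw [hFc_def]
    exact ((continuousOn_const.mul hcf1).add hcf2).add hcf3
  have hfdc : ContinuousOn fd (Icc 1 T) := by
    rw [hfd_def]
    exact hFcc.sub ((continuous_const.mul
      (Complex.continuous_ofReal.comp hγc)).continuousOn.mul hfc)
  have hEc : ContinuousOn E (Icc 1 T) := by
    rw [hE_def]
    exact (hXc.continuousOn).mul ((hfc.norm).pow 2)
  have hec : ContinuousOn efun (Icc 1 T) := by
    rw [hefun_def]
    exact (continuousOn_const.mul ((hXc.continuousOn).mul ((hfc.norm).pow 2))).add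
      ((hXc.continuousOn).mul (continuousOn_const.mul (hfc.inner hfdc)))
  have hhc : ContinuousOn hfun (Icc 1 T) := by
    rw [hhfun_def]
    refine ((continuousOn_const.mul (((hXc.continuousOn).mul hγc.continuousOn).mul
      ((hcf1.norm).pow 2))).add (continuousOn_const.mul ((hXc.continuousOn).mul
      ((hcf2.norm).pow 2)))).add (continuousOn_const.mul (((hXc.continuousOn).mul
      ((hγc.continuousOn).inv₀ (fun σ _ => (hγpos σ).ne'))).mul ((hcf3.norm).pow 2)))
  have hPonec : Continuous Pone := by
    rw [hPone_def]
    refine Continuous.div continuous_const (by fun_prop) (fun σ => by positivity)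
  have hPtwoc : Continuous Ptwo := by
    rw [hPtwo_def]
    refine Continuous.div continuous_const (by fun_prop) (fun σ => by positivity)
  have hPone0 : ∀ σ, 0 ≤ Pone σ := fun σ => by rw [hPone_def]; positivity
  have hPtwo0 : ∀ σ, 0 ≤ Ptwo σ := fun σ => by rw [hPtwo_def]; positivity
  have hE0 : ∀ σ ∈ Icc (1:ℝ) T, 0 ≤ E σ := fun σ _ => by rw [hE_def]; positivity
  have hh0 : ∀ σ ∈ Icc (1:ℝ) T, 0 ≤ hfun σ := by
    intro σ _
    rw [hhfun_def]
    have := (hγpos σ).le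
    have := hγpos σ
    positivity
  -- derivative of the energy
  have hEd : ∀ σ ∈ Icc (1:ℝ) T, HasDerivWithinAt E (efun σ) (Icc (1:ℝ) T) σ := by
    intro σ hσ
    have hX : HasDerivAt (fun τ : ℝ => Real.exp (2*a*u*τ)) (Real.exp (2*a*u*σ) * (2*a*u)) σ := by
      simpa using (((hasDerivAt_id σ).const_mul (2*a*u)).exp)
    have hf' : HasDerivWithinAt f (fd σ) (Icc (1:ℝ) T) σ := hf σ hσ
    have hN : HasDerivWithinAt (fun τ => ‖f τ‖^2) (2 * (inner ℝ (f σ) (fd σ) : ℝ))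
        (Icc (1:ℝ) T) σ := by
      have h2 := HasDerivWithinAt.inner ℝ hf' hf'
      have h3 : (fun τ => (inner ℝ (f τ) (f τ) : ℝ)) = fun τ => ‖f τ‖^2 :=
        funext fun τ => real_inner_self_eq_norm_sq _
      rw [h3] at h2
      have h5 : inner ℝ (f σ) (fd σ) + inner ℝ (fd σ) (f σ) = 2 * (inner ℝ (f σ) (fd σ) : ℝ) := by
        rw [real_inner_comm (f σ) (fd σ)]; ring
      rw [h5] at h2
      exact h2
    have h4 := hX.hasDerivWithinAt.mul hN
    rw [hE_def, hefun_def]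
    exact h4.congr_deriv (by ring)
  -- pointwise algebraic facts
  have hy0 : ∀ σ : ℝ, 0 < 1 + (c*(σ - t₀))^2 := fun σ => by positivity
  have hc2 : c^2 * L^2 = kR^2 := by
    calc c^2*L^2 = (c*L)^2 := by ring
      _ = |kR|^2 := by rw [hcL]
      _ = kR^2 := sq_abs kR
  have hgeq : ∀ σ : ℝ, γ σ = 4*Real.pi^2*L^2*(1 + (c*(σ - t₀))^2) := by
    intro σ
    rw [hγ' σ]
    linear_combination 4*Real.pi^2*(σ - t₀)^2 * hc2.symm
  have hA6 : ∀ σ : ℝ, (2*Real.pi*kR)^2 * (γ σ)⁻¹ ≤ Ptwo σ := by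
    intro σ
    have hy : 0 < 1 + (c*(σ - t₀))^2 := hy0 σ
    have h2 : (2*Real.pi*kR)^2 = c^2*L^2*(4*Real.pi^2) := by
      linear_combination (4*Real.pi^2) * hc2.symm
    have h3 : (2*Real.pi*kR)^2 * (γ σ)⁻¹ = c^2 / (1 + (c*(σ - t₀))^2) := by
      rw [h2, hgeq σ]
      field_simp
    rw [h3]
    simp only [hPtwo_def]
    exact (div_le_div_iff_of_pos_right hy).2 (by linarith only [mul_nonneg hc0.le (sub_nonneg.2 hc1)])
  have h9x : ∀ σ:ℝ, 9*u*(b₁*(σ - t₀))^2 = ν*(4*Real.pi^2*kR^2*(σ - t₀)^2) := by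
    intro σ
    have habs : |kR|^2 = kR^2 := sq_abs kR
    rw [hb₁_def, ← hu3]
    linear_combination (4*Real.pi^2*u^3*(σ - t₀)^2) * habs
  have hglb : ∀ σ:ℝ, 4*Real.pi^2*kR^2*(σ - t₀)^2 ≤ γ σ := by
    intro σ
    rw [hγ' σ]
    have h1 : (0:ℝ) ≤ 4*Real.pi^2*L^2 := by positivity
    linarith only [h1]
  have h9g : ∀ σ:ℝ, 9*u*(b₁*(σ - t₀))^2 ≤ ν*γ σ := by
    intro σ
    rw [h9x σ]
    exact mul_le_mul_of_nonneg_left (hglb σ) hν.le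
  have hA4 : ∀ σ:ℝ, 9*u - ν*γ σ ≤ Pone σ := by
    intro σ
    have hx : (0:ℝ) ≤ (b₁*(σ-t₀))^2 := sq_nonneg _
    have hx1 : (0:ℝ) < 1 + (b₁*(σ-t₀))^2 := by positivity
    simp only [hPone_def]
    rw [le_div_iff₀ hx1]
    linarith only [h9g σ, hu.le, mul_nonneg hu.le (mul_nonneg hx hx),
      mul_le_mul_of_nonneg_right (h9g σ) hx]
  have hA5 : ∀ σ:ℝ, 9*u ≤ Pone σ + ν*γ σ := by
    intro σ
    have hx : (0:ℝ) ≤ (b₁*(σ-t₀))^2 := sq_nonneg _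
    have hx1 : (0:ℝ) < 1 + (b₁*(σ-t₀))^2 := by positivity
    have h2 : 9*u - 9*u*(b₁*(σ-t₀))^2 ≤ Pone σ := by
      simp only [hPone_def]
      rw [le_div_iff₀ hx1]
      linarith only [hu.le, mul_nonneg hu.le (mul_nonneg hx hx)]
    linarith only [h9g σ, h2]
  -- the key pointwise energy inequality
  have hkey : ∀ σ ∈ Icc (1:ℝ) T,
      efun σ + 1/2*ν*(Real.exp (2*a*u*σ) * γ σ * ‖f σ‖^2)
        ≤ (Pone σ + Ptwo σ) * E σ + hfun σ := by
    intro σ hσ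
    have hXpos : (0:ℝ) < Real.exp (2*a*u*σ) := Real.exp_pos _
    have hg : 0 < γ σ := hγpos σ
    have hy : 0 < 1 + (c*(σ - t₀))^2 := hy0 σ
    have hinner : (inner ℝ (f σ) (fd σ) : ℝ)
        = (inner ℝ (f σ) (Fc σ) : ℝ) - (ν * γ σ) * ‖f σ‖^2 := by
      have hfd2 : fd σ = Fc σ - ((ν * γ σ : ℝ) : ℂ) * f σ := by
        simp only [hfd_def]; push_cast; ring
      rw [hfd2, aux_inner_sub]
    have hiF : (inner ℝ (f σ) (Fc σ) : ℝ)
        ≤ ‖f σ‖ * (2*Real.pi*|kR| * ‖f₁ σ‖) + ‖f σ‖ * ‖f₂ σ‖ + ‖f σ‖ * ‖f₃ σ‖ := by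
      simp only [hFc_def]
      have e1 : (inner ℝ (f σ) (2 * (Real.pi : ℂ) * Complex.I * (k : ℂ) * f₁ σ + f₂ σ + f₃ σ) : ℝ)
          = (inner ℝ (f σ) (2 * (Real.pi : ℂ) * Complex.I * (k : ℂ) * f₁ σ) : ℝ)
            + (inner ℝ (f σ) (f₂ σ) : ℝ) + (inner ℝ (f σ) (f₃ σ) : ℝ) := by
        rw [inner_add_right, inner_add_right]
      rw [e1]
      have b1 := real_inner_le_norm (f σ) (2 * (Real.pi : ℂ) * Complex.I * (k : ℂ) * f₁ σ)
      rw [aux_coeff_norm (f₁ σ) k] at b1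
      have b2 := real_inner_le_norm (f σ) (f₂ σ)
      have b3 := real_inner_le_norm (f σ) (f₃ σ)
      have hb1' : (inner ℝ (f σ) (2 * (Real.pi : ℂ) * Complex.I * (k : ℂ) * f₁ σ) : ℝ)
          ≤ ‖f σ‖ * (2*Real.pi*|kR| * ‖f₁ σ‖) := by
        calc (inner ℝ (f σ) (2 * (Real.pi : ℂ) * Complex.I * (k : ℂ) * f₁ σ) : ℝ)
            ≤ ‖f σ‖ * (2*Real.pi*|(k:ℝ)| * ‖f₁ σ‖) := by linarith only [b1]
          _ = ‖f σ‖ * (2*Real.pi*|kR| * ‖f₁ σ‖) := by rw [hkR_def]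
      linarith only [hb1', b2, b3]
    have A1 : 2*(2*Real.pi*|kR|)*(‖f σ‖*‖f₁ σ‖)
        ≤ Ptwo σ * ‖f σ‖^2 + c * (γ σ * ‖f₁ σ‖^2) := by
      have expand : Ptwo σ * ‖f σ‖^2 + c * (γ σ * ‖f₁ σ‖^2)
          - 2*(2*Real.pi*|kR|)*(‖f σ‖*‖f₁ σ‖)
          = (c/(1 + (c*(σ - t₀))^2)) * (‖f σ‖ - 2*Real.pi*L*(1 + (c*(σ - t₀))^2)*‖f₁ σ‖)^2 := by
        simp only [hPtwo_def, hgeq σ, hc_def]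
        field_simp
        ring
      linarith only [expand, mul_nonneg (div_nonneg hc0.le hy.le)
        (sq_nonneg (‖f σ‖ - 2*Real.pi*L*(1 + (c*(σ - t₀))^2)*‖f₁ σ‖))]
    have A2 : 2*(‖f σ‖*‖f₂ σ‖) ≤ u*‖f σ‖^2 + u⁻¹*‖f₂ σ‖^2 := by
      have expand : u*‖f σ‖^2 + u⁻¹*‖f₂ σ‖^2 - 2*(‖f σ‖*‖f₂ σ‖)
          = u⁻¹*(u*‖f σ‖ - ‖f₂ σ‖)^2 := by
        field_simp
        ring
      linarith only [expand, mul_nonneg (inv_nonneg.2 hu.le) (sq_nonneg (u*‖f σ‖ - ‖f₂ σ‖))]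
    have A3 : 2*(‖f σ‖*‖f₃ σ‖)
        ≤ ν*γ σ/2*‖f σ‖^2 + 2*ν⁻¹*((γ σ)⁻¹*‖f₃ σ‖^2) := by
      have expand : ν*γ σ/2*‖f σ‖^2 + 2*ν⁻¹*((γ σ)⁻¹*‖f₃ σ‖^2) - 2*(‖f σ‖*‖f₃ σ‖)
          = (ν*γ σ*‖f σ‖ - 2*‖f₃ σ‖)^2 / (2*(ν*γ σ)) := by
        field_simp
        ring
      linarith only [expand, div_nonneg (sq_nonneg (ν*γ σ*‖f σ‖ - 2*‖f₃ σ‖))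
        (by positivity : (0:ℝ) ≤ 2*(ν*γ σ))]
    have hA0 : 2*a*u*‖f σ‖^2 ≤ 8*u*‖f σ‖^2 := by
      linarith only [mul_nonneg (mul_nonneg (sub_nonneg.2 ha4) hu.le) (sq_nonneg ‖f σ‖)]
    have hA4' : (9*u - ν*γ σ)*‖f σ‖^2 ≤ Pone σ*‖f σ‖^2 :=
      mul_le_mul_of_nonneg_right (hA4 σ) (sq_nonneg _)
    have core : 2*a*u*‖f σ‖^2 + 2*((inner ℝ (f σ) (Fc σ):ℝ) - (ν*γ σ)*‖f σ‖^2)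
          + 1/2*ν*(γ σ*‖f σ‖^2)
        ≤ (Pone σ + Ptwo σ)*‖f σ‖^2
          + (c*(γ σ*‖f₁ σ‖^2) + u⁻¹*‖f₂ σ‖^2 + 2*ν⁻¹*((γ σ)⁻¹*‖f₃ σ‖^2)) := by
      linarith only [hiF, A1, A2, A3, hA0, hA4']
    have e1 : efun σ + 1/2*ν*(Real.exp (2*a*u*σ) * γ σ * ‖f σ‖^2)
        = Real.exp (2*a*u*σ) * (2*a*u*‖f σ‖^2
          + 2*((inner ℝ (f σ) (Fc σ):ℝ) - (ν*γ σ)*‖f σ‖^2) + 1/2*ν*(γ σ*‖f σ‖^2)) := by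
      simp only [hefun_def]
      rw [hinner]
      ring
    have e2 : (Pone σ + Ptwo σ) * E σ + hfun σ
        = Real.exp (2*a*u*σ) * ((Pone σ + Ptwo σ)*‖f σ‖^2
          + (c*(γ σ*‖f₁ σ‖^2) + u⁻¹*‖f₂ σ‖^2 + 2*ν⁻¹*((γ σ)⁻¹*‖f₃ σ‖^2))) := by
      simp only [hE_def, hhfun_def]
      ring
    rw [e1, e2]
    exact mul_le_mul_of_nonneg_left core hXpos.le
  -- name the goal integrals
  set J2 := ∫ s in (1:ℝ)..T, Real.exp (2*a*u*s) * (2*Real.pi*kR)^2 * (γ s)⁻¹ * ‖f s‖^2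
    with hJ2_def
  set J3 := ∫ s in (1:ℝ)..T, Real.exp (2*a*u*s) * γ s * ‖f s‖^2 with hJ3_def
  set J4 := ∫ s in (1:ℝ)..T, Real.exp (2*a*u*s) * ‖f s‖^2 with hJ4_def
  set R1 := ∫ s in (1:ℝ)..T, Real.exp (2*a*u*s) * γ s * ‖f₁ s‖^2 with hR1_def
  set R2 := ∫ s in (1:ℝ)..T, Real.exp (2*a*u*s) * ‖f₂ s‖^2 with hR2_def
  set R3 := ∫ s in (1:ℝ)..T, Real.exp (2*a*u*s) * (γ s)⁻¹ * ‖f₃ s‖^2 with hR3_def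
  -- integrability helper
  have hII : ∀ {φ : ℝ → ℝ}, ContinuousOn φ (Icc 1 T) → IntervalIntegrable φ volume 1 T :=
    fun hφ => hφ.intervalIntegrable_of_Icc h1T
  have hγinvc : ContinuousOn (fun σ => (γ σ)⁻¹) (Icc 1 T) :=
    (hγc.continuousOn).inv₀ (fun σ _ => (hγpos σ).ne')
  have cXN : ContinuousOn (fun σ => Real.exp (2*a*u*σ) * ‖f σ‖^2) (Icc 1 T) :=
    (hXc.continuousOn).mul ((hfc.norm).pow 2)
  have cXgN : ContinuousOn (fun σ => Real.exp (2*a*u*σ) * γ σ * ‖f σ‖^2) (Icc 1 T) :=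
    ((hXc.continuousOn).mul hγc.continuousOn).mul ((hfc.norm).pow 2)
  have hPc : Continuous (fun σ => Pone σ + Ptwo σ) := hPonec.add hPtwoc
  have hP0 : ∀ σ, 0 ≤ Pone σ + Ptwo σ := fun σ => add_nonneg (hPone0 σ) (hPtwo0 σ)
  have cPE : ContinuousOn (fun σ => (Pone σ + Ptwo σ) * (Real.exp (2*a*u*σ) * ‖f σ‖^2))
      (Icc 1 T) := (hPc.continuousOn).mul cXN
  -- integral of P is at most 31
  have hPint1 : (∫ σ in (1:ℝ)..T, Pone σ) ≤ 27 := by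
    have h1 := aux_arctan (c := 18*u) (b := b₁) (t₀ := t₀) hb₁ (by positivity) 1 T
    have h2 : 18*u/b₁*Real.pi = 27/|kR| := by
      rw [hb₁_def]
      field_simp
      ring
    have h3 : 27/|kR| ≤ 27 := by
      rw [div_le_iff₀ (by linarith only [hk1] : (0:ℝ) < |kR|)]
      linarith only [hk1]
    calc (∫ σ in (1:ℝ)..T, Pone σ)
        = ∫ σ in (1:ℝ)..T, 18*u/(1 + (b₁*(σ - t₀))^2) := by simp only [hPone_def]
      _ ≤ 18*u/b₁*Real.pi := h1
      _ ≤ 27 := by rw [h2]; exact h3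
  have hPint2 : (∫ σ in (1:ℝ)..T, Ptwo σ) ≤ Real.pi := by
    have h1 := aux_arctan (c := c) (b := c) (t₀ := t₀) hc0 hc0.le 1 T
    calc (∫ σ in (1:ℝ)..T, Ptwo σ)
        = ∫ σ in (1:ℝ)..T, c/(1 + (c*(σ - t₀))^2) := by simp only [hPtwo_def]
      _ ≤ c/c*Real.pi := h1
      _ = Real.pi := by rw [div_self hc0.ne', one_mul]
  have hPint : (∫ σ in (1:ℝ)..T, (Pone σ + Ptwo σ)) ≤ 31 := by
    rw [integral_add (hII hPonec.continuousOn) (hII hPtwoc.continuousOn)]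
    linarith only [Real.pi_le_four, hPint1, hPint2]
  -- Gronwall
  have hweak : ∀ σ ∈ Icc (1:ℝ) T, efun σ ≤ (Pone σ + Ptwo σ) * E σ + hfun σ := by
    intro σ hσ
    have h1 := hkey σ hσ
    have h2 : 0 ≤ 1/2*ν*(Real.exp (2*a*u*σ) * γ σ * ‖f σ‖^2) := by
      have := (hγpos σ).le
      positivity
    exact (le_add_of_nonneg_right h2).trans h1
  have hsup := aux_gronwall h1T E efun (fun σ => Pone σ + Ptwo σ) hfun hEd hE0 hec hPc hP0
    hhc hh0 hweak hPint
  set H := ∫ σ in (1:ℝ)..T, hfun σ with hH_def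
  set M := Real.exp 31 * (E 1 + H) with hM_def
  have hH0 : 0 ≤ H := integral_nonneg h1T hh0
  have hE10 : 0 ≤ E 1 := hE0 1 ⟨le_rfl, h1T⟩
  have hM0 : 0 ≤ M := by
    rw [hM_def]
    have : 0 ≤ E 1 + H := by linarith only [hE10, hH0]
    positivity
  have hsup' : ∀ σ ∈ Icc (1:ℝ) T, Real.exp (2*a*u*σ) * ‖f σ‖^2 ≤ M := by
    intro σ hσ
    have h1 := hsup σ hσ
    simpa only [hE_def] using h1
  -- bound on ∫ P * (energy)
  have hIPE : (∫ σ in (1:ℝ)..T, (Pone σ + Ptwo σ) * (Real.exp (2*a*u*σ) * ‖f σ‖^2)) ≤ 31*M := by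
    have step1 : (∫ σ in (1:ℝ)..T, (Pone σ + Ptwo σ) * (Real.exp (2*a*u*σ) * ‖f σ‖^2))
        ≤ ∫ σ in (1:ℝ)..T, (Pone σ + Ptwo σ) * M := by
      refine integral_mono_on h1T (hII cPE) (hII ((hPc.continuousOn).mul continuousOn_const)) ?_
      intro σ hσ
      exact mul_le_mul_of_nonneg_left (hsup' σ hσ) (hP0 σ)
    have step2 : (∫ σ in (1:ℝ)..T, (Pone σ + Ptwo σ) * M)
        = (∫ σ in (1:ℝ)..T, (Pone σ + Ptwo σ)) * M := intervalIntegral.integral_mul_const _ _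
    calc (∫ σ in (1:ℝ)..T, (Pone σ + Ptwo σ) * (Real.exp (2*a*u*σ) * ‖f σ‖^2))
        ≤ (∫ σ in (1:ℝ)..T, (Pone σ + Ptwo σ)) * M := by rw [← step2]; exact step1
      _ ≤ 31*M := mul_le_mul_of_nonneg_right hPint hM0
  -- term 2 : inviscid damping
  have hJ2 : J2 ≤ 31*M := by
    rw [hJ2_def]
    have step1 : (∫ s in (1:ℝ)..T, Real.exp (2*a*u*s) * (2*Real.pi*kR)^2 * (γ s)⁻¹ * ‖f s‖^2)
        ≤ ∫ σ in (1:ℝ)..T, (Pone σ + Ptwo σ) * M := by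
      refine integral_mono_on h1T
        (hII ((((hXc.continuousOn).mul continuousOn_const).mul hγinvc).mul ((hfc.norm).pow 2)))
        (hII ((hPc.continuousOn).mul continuousOn_const)) ?_
      intro σ hσ
      have h1 : Real.exp (2*a*u*σ) * (2*Real.pi*kR)^2 * (γ σ)⁻¹ * ‖f σ‖^2
          = ((2*Real.pi*kR)^2 * (γ σ)⁻¹) * (Real.exp (2*a*u*σ) * ‖f σ‖^2) := by ring
      rw [h1]
      have h2 : ((2*Real.pi*kR)^2 * (γ σ)⁻¹) * (Real.exp (2*a*u*σ) * ‖f σ‖^2)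
          ≤ Ptwo σ * (Real.exp (2*a*u*σ) * ‖f σ‖^2) :=
        mul_le_mul_of_nonneg_right (hA6 σ) (by positivity)
      have h3 : Ptwo σ * (Real.exp (2*a*u*σ) * ‖f σ‖^2) ≤ Ptwo σ * M :=
        mul_le_mul_of_nonneg_left (hsup' σ hσ) (hPtwo0 σ)
      have h4 : 0 ≤ Pone σ * M := mul_nonneg (hPone0 σ) hM0
      linarith only [h2, h3, h4]
    have step2 : (∫ σ in (1:ℝ)..T, (Pone σ + Ptwo σ) * M)
        = (∫ σ in (1:ℝ)..T, (Pone σ + Ptwo σ)) * M := intervalIntegral.integral_mul_const _ _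
    calc (∫ s in (1:ℝ)..T, Real.exp (2*a*u*s) * (2*Real.pi*kR)^2 * (γ s)⁻¹ * ‖f s‖^2)
        ≤ (∫ σ in (1:ℝ)..T, (Pone σ + Ptwo σ)) * M := by rw [← step2]; exact step1
      _ ≤ 31*M := mul_le_mul_of_nonneg_right hPint hM0
  -- term 3 : enhanced dissipation
  have hFTCe : (∫ σ in (1:ℝ)..T, efun σ) = E T - E 1 := aux_ftc E efun hEd hec h1T le_rfl
  have hkey2 : ∀ σ ∈ Icc (1:ℝ) T, 0 ≤ (Pone σ + Ptwo σ) * (Real.exp (2*a*u*σ) * ‖f σ‖^2)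
      + hfun σ - efun σ - 1/2*ν*(Real.exp (2*a*u*σ) * γ σ * ‖f σ‖^2) := by
    intro σ hσ
    have h1 := hkey σ hσ
    simp only [hE_def] at h1
    linarith only [h1]
  have hint0 : 0 ≤ ∫ σ in (1:ℝ)..T, ((Pone σ + Ptwo σ) * (Real.exp (2*a*u*σ) * ‖f σ‖^2)
      + hfun σ - efun σ - 1/2*ν*(Real.exp (2*a*u*σ) * γ σ * ‖f σ‖^2)) :=
    integral_nonneg h1T hkey2
  have hsplit : (∫ σ in (1:ℝ)..T, ((Pone σ + Ptwo σ) * (Real.exp (2*a*u*σ) * ‖f σ‖^2)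
      + hfun σ - efun σ - 1/2*ν*(Real.exp (2*a*u*σ) * γ σ * ‖f σ‖^2)))
      = (∫ σ in (1:ℝ)..T, (Pone σ + Ptwo σ) * (Real.exp (2*a*u*σ) * ‖f σ‖^2))
        + H - (∫ σ in (1:ℝ)..T, efun σ) - 1/2*ν*J3 := by
    rw [hH_def, hJ3_def]
    rw [integral_sub (((hII cPE).add (hII hhc)).sub (hII hec))
        (hII (φ := fun σ => 1/2*ν*(Real.exp (2*a*u*σ) * γ σ * ‖f σ‖^2))
          (continuousOn_const.mul cXgN)),
      integral_sub ((hII cPE).add (hII hhc)) (hII hec),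
      integral_add (hII cPE) (hII hhc),
      intervalIntegral.integral_const_mul]
  have hET : 0 ≤ E T := hE0 T ⟨h1T, le_rfl⟩
  have hJ3 : ν * J3 ≤ 2*(E 1 + 31*M + H) := by
    rw [hsplit] at hint0
    linarith only [hint0, hFTCe, hIPE, hET]
  -- term 4
  have hptJ4 : ∀ σ ∈ Icc (1:ℝ) T, 9*u*(Real.exp (2*a*u*σ) * ‖f σ‖^2)
      ≤ (Pone σ + Ptwo σ)*(Real.exp (2*a*u*σ) * ‖f σ‖^2)
        + ν*(Real.exp (2*a*u*σ) * γ σ * ‖f σ‖^2) := by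
    intro σ hσ
    have hXN : (0:ℝ) ≤ Real.exp (2*a*u*σ) * ‖f σ‖^2 := by positivity
    have h2 := mul_le_mul_of_nonneg_right (hA5 σ) hXN
    have h4 : 0 ≤ Ptwo σ * (Real.exp (2*a*u*σ) * ‖f σ‖^2) := mul_nonneg (hPtwo0 σ) hXN
    linarith only [h2, h4]
  have hJ4 : u * J4 ≤ 1/9*(31*M + ν*J3) := by
    have hJ4a : (∫ σ in (1:ℝ)..T, 9*u*(Real.exp (2*a*u*σ) * ‖f σ‖^2))
        ≤ ∫ σ in (1:ℝ)..T, ((Pone σ + Ptwo σ)*(Real.exp (2*a*u*σ) * ‖f σ‖^2)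
          + ν*(Real.exp (2*a*u*σ) * γ σ * ‖f σ‖^2)) :=
      integral_mono_on h1T (hII (continuousOn_const.mul cXN))
        (hII (cPE.add (continuousOn_const.mul cXgN))) hptJ4
    rw [intervalIntegral.integral_const_mul,
      integral_add (hII cPE) (hII (φ := fun σ => ν*(Real.exp (2*a*u*σ) * γ σ * ‖f σ‖^2))
        (continuousOn_const.mul cXgN)),
      intervalIntegral.integral_const_mul, ← hJ4_def, ← hJ3_def] at hJ4a
    linarith only [hJ4a, hIPE]
  -- evaluate H
  have hHeval : H = c*R1 + u⁻¹*R2 + 2*ν⁻¹*R3 := by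
    rw [hH_def, hR1_def, hR2_def, hR3_def]
    simp only [hhfun_def]
    have i1 : IntervalIntegrable
        (fun σ => c * (Real.exp (2*a*u*σ) * γ σ * ‖f₁ σ‖^2)) volume 1 T :=
      hII (continuousOn_const.mul (((hXc.continuousOn).mul hγc.continuousOn).mul
        ((hcf1.norm).pow 2)))
    have i2 : IntervalIntegrable
        (fun σ => u⁻¹ * (Real.exp (2*a*u*σ) * ‖f₂ σ‖^2)) volume 1 T :=
      hII (continuousOn_const.mul ((hXc.continuousOn).mul ((hcf2.norm).pow 2)))
    have i3 : IntervalIntegrable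
        (fun σ => 2*ν⁻¹ * (Real.exp (2*a*u*σ) * (γ σ)⁻¹ * ‖f₃ σ‖^2)) volume 1 T :=
      hII (continuousOn_const.mul (((hXc.continuousOn).mul hγinvc).mul ((hcf3.norm).pow 2)))
    rw [integral_add (i1.add i2) i3, integral_add i1 i2,
      intervalIntegral.integral_const_mul, intervalIntegral.integral_const_mul,
      intervalIntegral.integral_const_mul]
  -- nonnegativity of the data integrals
  have hR10 : 0 ≤ R1 := by
    rw [hR1_def]
    refine integral_nonneg h1T (fun σ _ => ?_)
    have := (hγpos σ).le
    positivity
  have hR20 : 0 ≤ R2 := by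
    rw [hR2_def]
    refine integral_nonneg h1T (fun σ _ => ?_)
    positivity
  have hR30 : 0 ≤ R3 := by
    rw [hR3_def]
    refine integral_nonneg h1T (fun σ _ => ?_)
    have := (hγpos σ).le
    positivity
  -- rewrite the right-hand side coefficients
  have hrw1 : |kR| * (kR^2 + (l:ℝ)^2) ^ (-(1:ℝ)/2) = c := by
    have hinv : (kR^2 + (l:ℝ)^2) ^ (-(1:ℝ)/2) = L⁻¹ := by
      rw [show (-(1:ℝ)/2) = -((1:ℝ)/2) by norm_num, Real.rpow_neg (by positivity),
        ← Real.sqrt_eq_rpow, ← hL_def]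
    rw [hinv, hc_def, div_eq_mul_inv]
  have hrw2 : ν ^ (-(1:ℝ)/3) = u⁻¹ := by
    rw [show (-(1:ℝ)/3) = -((1:ℝ)/3) by norm_num, Real.rpow_neg hν.le, hu_def]
  -- first term of the LHS
  have hterm1 : Real.exp (2*a*u*t) * ‖f t‖^2 ≤ M := hsup' t ht
  -- bound E 1
  have hE1b : E 1 ≤ Real.exp 8 * ‖f 1‖^2 := by
    simp only [hE_def]
    have hau : a * u ≤ 4 := by
      calc a*u ≤ 4*1 := mul_le_mul ha4 hu1 hu.le (by norm_num)
        _ = 4 := by norm_num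
    refine mul_le_mul_of_nonneg_right (Real.exp_le_exp.2 (by linarith only [hau])) (by positivity)
  -- final numeric assembly
  rw [hrw1, hrw2]
  have h9e : (9:ℝ) ≤ Real.exp 8 := by
    have := Real.add_one_le_exp (8:ℝ); linarith only [this]
  have hs1 : 0 ≤ c*R1 := mul_nonneg hc0.le hR10
  have hs2 : 0 ≤ u⁻¹*R2 := mul_nonneg (by positivity) hR20
  have hs3 : 0 ≤ ν⁻¹*R3 := mul_nonneg (by positivity) hR30
  have hW0 : 0 ≤ ‖f 1‖^2 + c*R1 + u⁻¹*R2 + ν⁻¹*R3 := by positivity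
  have hEH : E 1 + H ≤ Real.exp 8 * (‖f 1‖^2 + c*R1 + u⁻¹*R2 + ν⁻¹*R3) := by
    rw [hHeval]
    have m1 : 0 ≤ (Real.exp 8 - 1) * (c*R1) := mul_nonneg (by linarith only [h9e]) hs1
    have m2 : 0 ≤ (Real.exp 8 - 1) * (u⁻¹*R2) := mul_nonneg (by linarith only [h9e]) hs2
    have m3 : 0 ≤ (Real.exp 8 - 2) * (ν⁻¹*R3) := mul_nonneg (by linarith only [h9e]) hs3
    have hν3 : 2*ν⁻¹*R3 = 2*(ν⁻¹*R3) := by ring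
    linarith only [hE1b, m1, m2, m3]
  have hMW : M ≤ Real.exp 39 * (‖f 1‖^2 + c*R1 + u⁻¹*R2 + ν⁻¹*R3) := by
    rw [hM_def]
    calc Real.exp 31 * (E 1 + H)
        ≤ Real.exp 31 * (Real.exp 8 * (‖f 1‖^2 + c*R1 + u⁻¹*R2 + ν⁻¹*R3)) :=
          mul_le_mul_of_nonneg_left hEH (Real.exp_pos 31).le
      _ = Real.exp 39 * (‖f 1‖^2 + c*R1 + u⁻¹*R2 + ν⁻¹*R3) := by
          rw [← mul_assoc, ← Real.exp_add]; norm_num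
  have hWW : 0 ≤ Real.exp 39 * (‖f 1‖^2 + c*R1 + u⁻¹*R2 + ν⁻¹*R3) := by positivity
  have hsum2 : u*J4 ≤ 31/9*M + (2*(E 1 + 31*M + H))/9 := by linarith only [hJ4, hJ3]
  have htot : Real.exp (2*a*u*t) * ‖f t‖^2 + J2 + ν*J3 + u*J4 ≤ 105*M + 3*(E 1 + H) := by
    linarith only [hterm1, hJ2, hJ3, hsum2, hM0, hE10, hH0]
  have h3' : Real.exp 8 * (‖f 1‖^2 + c*R1 + u⁻¹*R2 + ν⁻¹*R3)
      ≤ Real.exp 39 * (‖f 1‖^2 + c*R1 + u⁻¹*R2 + ν⁻¹*R3) :=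
    mul_le_mul_of_nonneg_right (Real.exp_le_exp.2 (by norm_num)) hW0
  have hfin : 105*M + 3*(E 1 + H)
      ≤ 1000 * Real.exp 39 * (‖f 1‖^2 + c*R1 + u⁻¹*R2 + ν⁻¹*R3) := by
    linarith only [hMW, hEH, h3', hWW]
  linarith only [htot, hfin]
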